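/- For every n ≥ 0, the number of treeshelves of size n avoiding the pattern (left child having a right child) equals the Bell number b_n, the number of set partitions of {1,…,n}; equivalently, the exponential generating function of these counts is e^{e^z − 1}. -/

import Mathlib

/-- Binary trees with natural-number labels, where each child slot (left/right)
is explicit; `leaf` denotes the absence of a subtree.  A *treeshelf* will be such
a tree whose labels are exactly `{1, …, n}` and increase away from the root. -/
inductive TShelf : Type where
  | leaf : TShelf
  | node : ℕ → TShelf → TShelf → TShelf

namespace TShelf

/-- Whether the tree is nonempty (i.e. an actual node). -/
def isNode : TShelf → Bool
  | leaf => false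
  | node _ _ _ => true

/-- The label of the root (junk value `0` for the empty tree). -/
def rootLabel : TShelf → ℕ
  | leaf => 0
  | node a _ _ => a

/-- The left subtree. -/
def left : TShelf → TShelf
  | leaf => leaf
  | node _ l _ => l

/-- The right subtree. -/
def right : TShelf → TShelf
  | leaf => leaf
  | node _ _ r => r

/-- The multiset of labels occurring in the tree. -/
def labels : TShelf → Multiset ℕ
  | leaf => 0
  | node a l r => a ::ₘ (l.labels + r.labels)

/-- Every child's label is greater than its parent's label. -/
def increasing : TShelf → Bool
  | leaf => true
  | node a l r =>
      (!l.isNode || decide (a < l.rootLabel)) &&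
      (!r.isNode || decide (a < r.rootLabel)) &&
      l.increasing && r.increasing

/-- The number of left children (nodes attached to their parent as a left child). -/
def numLeft : TShelf → ℕ
  | leaf => 0
  | node _ l r => (if l.isNode then 1 else 0) + l.numLeft + r.numLeft

/-- `t` is a treeshelf of size `n`: its nodes are labeled bijectively by
`{1, …, n}` and labels increase from parents to children. -/
def IsShelf (n : ℕ) (t : TShelf) : Prop :=
  t.labels = (Finset.Icc 1 n).val ∧ t.increasing = true

/-- Avoidance of the pattern "a left child having a right child":
no node is simultaneously the left child of its parent and has a right child. -/
def avoidsLR : TShelf → Bool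
  | leaf => true
  | node _ l r => !(l.isNode && l.right.isNode) && l.avoidsLR && r.avoidsLR

/-- Avoidance of the pattern "a left child having a left child":
no node is simultaneously the left child of its parent and has a left child. -/
def avoidsLL : TShelf → Bool
  | leaf => true
  | node _ l r => !(l.isNode && l.left.isNode) && l.avoidsLL && r.avoidsLL

/-- Avoidance of the pattern "left label smaller than right label": no node has
both a left and a right child with the left child's label smaller than the
right child's label. -/
def avoidsLess : TShelf → Bool
  | leaf => true
  | node _ l r =>
      !(l.isNode && r.isNode && decide (l.rootLabel < r.rootLabel)) &&
      l.avoidsLess && r.avoidsLess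

/-- Canonical representation of unordered sibling pairs: whenever a node has two
children, the left one carries the smaller label.  Trees satisfying this are
canonical representatives of trees whose sibling pairs are unordered. -/
def pairCanon : TShelf → Bool
  | leaf => true
  | node _ l r =>
      (!(l.isNode && r.isNode) || decide (l.rootLabel < r.rootLabel)) &&
      l.pairCanon && r.pairCanon

/-- Canonical representation of untagged only children: every only child is a
right child.  Together with `pairCanon`, trees satisfying this are canonical
representatives of unordered binary increasing trees. -/
def singleRight : TShelf → Bool
  | leaf => true
  | node _ l r => (!l.isNode || r.isNode) && l.singleRight && r.singleRight

end TShelf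

namespace TShelf

/-! ### Auxiliary lemmas -/

lemma isNode_false_iff {t : TShelf} : t.isNode = false ↔ t = leaf := by
  cases t <;> simp [isNode]

lemma isNode_of_mem_labels {t : TShelf} {x : ℕ} (h : x ∈ t.labels) : t.isNode = true := by
  cases t with
  | leaf => simp [labels] at h
  | node a l r => rfl

lemma root_mem {t : TShelf} (h : t.isNode = true) : t.rootLabel ∈ t.labels := by
  cases t with
  | leaf => simp [isNode] at h
  | node a l r => simp [labels, rootLabel]

lemma increasing_node {a : ℕ} {l r : TShelf} : (node a l r).increasing = true ↔
    (l.isNode = true → a < l.rootLabel) ∧ (r.isNode = true → a < r.rootLabel) ∧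
      l.increasing = true ∧ r.increasing = true := by
  simp only [increasing, Bool.and_eq_true, Bool.or_eq_true, Bool.not_eq_true',
    decide_eq_true_eq]
  constructor
  · rintro ⟨⟨⟨h1, h2⟩, h3⟩, h4⟩
    refine ⟨fun hl => h1.resolve_left (by simp [hl]), fun hr => h2.resolve_left (by simp [hr]),
      h3, h4⟩
  · rintro ⟨h1, h2, h3, h4⟩
    refine ⟨⟨⟨?_, ?_⟩, h3⟩, h4⟩
    · rcases hl : l.isNode with _ | _
      · exact Or.inl rfl
      · exact Or.inr (h1 hl)
    · rcases hr : r.isNode with _ | _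
      · exact Or.inl rfl
      · exact Or.inr (h2 hr)

lemma avoidsLR_node {a : ℕ} {l r : TShelf} : (node a l r).avoidsLR = true ↔
    (l.isNode && l.right.isNode) = false ∧ l.avoidsLR = true ∧ r.avoidsLR = true := by
  simp only [avoidsLR, Bool.and_eq_true, Bool.not_eq_true']
  tauto

lemma right_not_node {l : TShelf} (h : (l.isNode && l.right.isNode) = false) :
    l.right.isNode = false := by
  cases l with
  | leaf => rfl
  | node a l' r' => simpa [isNode] using h

lemma root_le {t : TShelf} (h : t.increasing = true) : ∀ x ∈ t.labels, t.rootLabel ≤ x := by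
  induction t with
  | leaf => intro x hx; simp [labels] at hx
  | node a l r ihl ihr =>
    rw [increasing_node] at h
    obtain ⟨h1, h2, h3, h4⟩ := h
    intro x hx
    simp only [labels, Multiset.mem_cons, Multiset.mem_add] at hx
    show a ≤ x
    rcases hx with rfl | hx | hx
    · exact le_rfl
    · exact le_of_lt (lt_of_lt_of_le (h1 (isNode_of_mem_labels hx)) (ihl h3 x hx))
    · exact le_of_lt (lt_of_lt_of_le (h2 (isNode_of_mem_labels hx)) (ihr h4 x hx))

/-! ### Left chains -/

/-- The left chain with labels given by the list. -/
def chain : List ℕ → TShelf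
  | [] => leaf
  | x :: xs => node x (chain xs) leaf

lemma chain_labels (L : List ℕ) : (chain L).labels = (L : Multiset ℕ) := by
  induction L with
  | nil => rfl
  | cons x xs ih => simp [chain, labels, ih]

lemma chain_right (L : List ℕ) : (chain L).right = leaf := by
  cases L <;> rfl

lemma chain_avoids (L : List ℕ) : (chain L).avoidsLR = true := by
  induction L with
  | nil => rfl
  | cons x xs ih =>
    rw [chain, avoidsLR_node]
    exact ⟨by rw [chain_right]; simp [isNode], ih, rfl⟩

lemma chain_increasing {L : List ℕ} (h : L.Pairwise (· < ·)) : (chain L).increasing = true := by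
  induction L with
  | nil => rfl
  | cons x xs ih =>
    rw [chain, increasing_node]
    refine ⟨?_, by simp [isNode], ih h.of_cons, rfl⟩
    intro hn
    cases xs with
    | nil => simp [chain, isNode] at hn
    | cons y ys => exact (List.pairwise_cons.1 h).1 y (by simp) -- x < y = rootLabel

/-- A left chain: no node has a right child. -/
def leftChain : TShelf → Bool
  | leaf => true
  | node _ l r => !r.isNode && leftChain l

lemma leftChain_of_avoids : ∀ t : TShelf, t.avoidsLR = true → t.right.isNode = false →
    t.leftChain = true := by
  intro t
  induction t with
  | leaf => intro _ _; rfl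
  | node a l r ihl ihr =>
    intro ha hr
    rw [avoidsLR_node] at ha
    rw [leftChain, Bool.and_eq_true, Bool.not_eq_true']
    exact ⟨hr, ihl ha.2.1 (right_not_node ha.1)⟩

lemma chain_unique : ∀ t : TShelf, t.leftChain = true → t.increasing = true →
    chain (Multiset.sort t.labels (· ≤ ·)) = t := by
  intro t
  induction t with
  | leaf => simp [labels, chain]
  | node a l r ihl ihr =>
    intro hc hi
    rw [leftChain, Bool.and_eq_true, Bool.not_eq_true'] at hc
    have hr : r = leaf := isNode_false_iff.1 hc.1
    subst hr
    rw [increasing_node] at hi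
    have hlab : (node a l leaf).labels = a ::ₘ l.labels := by simp [labels]
    rw [hlab, Multiset.sort_cons (r := (· ≤ ·)) (a := a) (s := l.labels) ?_]
    · rw [chain]
      rw [ihl hc.2 hi.2.2.1]
    · intro x hx
      exact le_of_lt (lt_of_lt_of_le (hi.1 (isNode_of_mem_labels hx))
        (root_le hi.2.2.1 x hx))

/-! ### Shelves over a general label set -/

/-- Treeshelves with label set `s` avoiding the pattern LR. -/
def ShelfT (s : Finset ℕ) : Type :=
  {t : TShelf // t.labels = s.val ∧ t.increasing = true ∧ t.avoidsLR = true}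

lemma root_eq_min {s : Finset ℕ} (hs : s.Nonempty) {a : ℕ} {l r : TShelf}
    (h1 : (node a l r).labels = s.val) (h2 : (node a l r).increasing = true) :
    a = s.min' hs := by
  have hmem : a ∈ s := by
    rw [← Finset.mem_val, ← h1]; simp [labels]
  have h3 : a ≤ s.min' hs := by
    have := root_le h2 (s.min' hs) (by rw [h1]; exact (s.min'_mem hs))
    simpa [rootLabel] using this
  exact le_antisymm h3 (s.min'_le a hmem)

lemma lt_min_of_mem_erase {s : Finset ℕ} (hs : s.Nonempty) {x : ℕ}
    (hx : x ∈ s.erase (s.min' hs)) : s.min' hs < x := by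
  rw [Finset.mem_erase] at hx
  exact lt_of_le_of_ne (s.min'_le x hx.2) (Ne.symm hx.1)

/-- Nodup facts for a shelf node. -/
lemma shelf_nodup {s : Finset ℕ} {a : ℕ} {l r : TShelf}
    (hlab : (node a l r).labels = s.val) :
    a ∉ l.labels + r.labels ∧ l.labels.Nodup ∧ r.labels.Nodup := by
  have hnd : (a ::ₘ (l.labels + r.labels)).Nodup := by
    show ((node a l r).labels).Nodup
    rw [hlab]; exact s.nodup
  rw [Multiset.nodup_cons, Multiset.nodup_add] at hnd
  exact ⟨hnd.1, hnd.2.1, hnd.2.2.1⟩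

lemma shelf_lt {a : ℕ} {l r : TShelf} (hinc : (node a l r).increasing = true) :
    ∀ x ∈ l.labels + r.labels, a < x := by
  rw [increasing_node] at hinc
  intro x hx
  rcases Multiset.mem_add.1 hx with hx | hx
  · exact lt_of_lt_of_le (hinc.1 (isNode_of_mem_labels hx)) (root_le hinc.2.2.1 x hx)
  · exact lt_of_lt_of_le (hinc.2.1 (isNode_of_mem_labels hx)) (root_le hinc.2.2.2 x hx)

/-- Forward direction: decompose a shelf into the block of the root and the rest. -/
def treeFwd (s : Finset ℕ) (hs : s.Nonempty) (tt : ShelfT s) :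
    Σ B : {B : Finset ℕ // B ⊆ s.erase (s.min' hs)}, ShelfT (s.erase (s.min' hs) \ B.1) :=
  match tt with
  | ⟨leaf, ht⟩ => absurd ht.1 (by
      simp only [labels]
      intro h
      exact hs.ne_empty (Finset.val_eq_zero.1 h.symm))
  | ⟨node a l r, ht⟩ =>
    ⟨⟨⟨l.labels, (shelf_nodup ht.1).2.1⟩, by
        intro x hx
        have hx' : x ∈ l.labels := hx
        rw [Finset.mem_erase, ← root_eq_min hs ht.1 ht.2.1]
        refine ⟨(shelf_lt ht.2.1 x (Multiset.mem_add.2 (Or.inl hx'))).ne', ?_⟩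
        rw [← Finset.mem_val, ← ht.1]
        simp only [labels, Multiset.mem_cons, Multiset.mem_add]
        exact Or.inr (Or.inl hx')⟩,
      ⟨r, by
        show r.labels = (s.erase (s.min' hs) \ ⟨l.labels, (shelf_nodup ht.1).2.1⟩).val
        rw [Finset.sdiff_val, Finset.erase_val]
        show r.labels = s.val.erase (s.min' hs) - l.labels
        rw [← root_eq_min hs ht.1 ht.2.1, ← ht.1]
        show r.labels = (a ::ₘ (l.labels + r.labels)).erase a - l.labels
        rw [Multiset.erase_cons_head, add_tsub_cancel_left],
       (increasing_node.1 ht.2.1).2.2.2,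
       (avoidsLR_node.1 ht.2.2).2.2⟩⟩

/-- Backward direction: build a shelf from a block and a smaller shelf. -/
def treeBwd (s : Finset ℕ) (hs : s.Nonempty)
    (p : Σ B : {B : Finset ℕ // B ⊆ s.erase (s.min' hs)}, ShelfT (s.erase (s.min' hs) \ B.1)) :
    ShelfT s :=
  ⟨node (s.min' hs) (chain ((p.1.1).sort (· ≤ ·))) p.2.1, by
    obtain ⟨⟨B, hB⟩, ⟨r, hrlab, hrinc, hravd⟩⟩ := p
    dsimp only
    refine ⟨?_, ?_, ?_⟩
    · show (s.min' hs) ::ₘ ((chain (B.sort (· ≤ ·))).labels + r.labels) = s.val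
      rw [chain_labels, Finset.sort_eq, hrlab, Finset.sdiff_val, Finset.erase_val,
        add_tsub_cancel_of_le (by
          have := Finset.val_le_iff.2 hB
          rwa [Finset.erase_val] at this)]
      exact Multiset.cons_erase (s.min'_mem hs)
    · rw [increasing_node]
      refine ⟨?_, ?_, chain_increasing ((Finset.sortedLT_sort B).pairwise), hrinc⟩
      · intro hn
        have hmem : (chain (B.sort (· ≤ ·))).rootLabel ∈ (chain (B.sort (· ≤ ·))).labels :=
          root_mem hn
        rw [chain_labels, Finset.sort_eq] at hmem
        exact lt_min_of_mem_erase hs (hB hmem)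
      · intro hn
        have hmem := root_mem hn
        rw [hrlab] at hmem
        exact lt_min_of_mem_erase hs (Finset.mem_sdiff.1 hmem).1
    · rw [avoidsLR_node]
      refine ⟨?_, chain_avoids _, hravd⟩
      rw [chain_right]
      simp [isNode]⟩

lemma treeBwd_treeFwd (s : Finset ℕ) (hs : s.Nonempty) (tt : ShelfT s) :
    treeBwd s hs (treeFwd s hs tt) = tt := by
  obtain ⟨t, ht⟩ := tt
  cases t with
  | leaf =>
    exact absurd ht.1 (by
      simp only [labels]
      intro h
      exact hs.ne_empty (Finset.val_eq_zero.1 h.symm))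
  | node a l r =>
    apply Subtype.ext
    show node (s.min' hs) (chain (Multiset.sort l.labels (· ≤ ·))) r = node a l r
    rw [← root_eq_min hs ht.1 ht.2.1, chain_unique l ?lc ?inc]
    case lc =>
      have havd := ht.2.2
      rw [avoidsLR_node] at havd
      exact leftChain_of_avoids l havd.2.1 (right_not_node havd.1)
    case inc => exact (increasing_node.1 ht.2.1).2.2.1

lemma treeBwd_injective (s : Finset ℕ) (hs : s.Nonempty) :
    Function.Injective (treeBwd s hs) := by
  rintro ⟨⟨B1, hB1⟩, ⟨r1, hr1⟩⟩ ⟨⟨B2, hB2⟩, ⟨r2, hr2⟩⟩ h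
  have h' : node (s.min' hs) (chain (B1.sort (· ≤ ·))) r1
      = node (s.min' hs) (chain (B2.sort (· ≤ ·))) r2 := congrArg Subtype.val h
  injection h' with h1 h2 h3
  have hB : B1 = B2 := by
    have := congrArg labels h2
    rw [chain_labels, chain_labels, Finset.sort_eq, Finset.sort_eq] at this
    exact Finset.val_inj.1 this
  subst hB
  subst h3
  rfl

/-- The decomposition equivalence for shelves. -/
def treeEquiv (s : Finset ℕ) (hs : s.Nonempty) :
    ShelfT s ≃ Σ B : {B : Finset ℕ // B ⊆ s.erase (s.min' hs)},
      ShelfT (s.erase (s.min' hs) \ B.1) where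
  toFun := treeFwd s hs
  invFun := treeBwd s hs
  left_inv := treeBwd_treeFwd s hs
  right_inv := fun p => treeBwd_injective s hs (treeBwd_treeFwd s hs (treeBwd s hs p))

/-! ### The analogous decomposition for partitions -/

lemma erase_parts_sup (s : Finset ℕ) (m : ℕ) (hm : m ∈ s) (P : Finpartition s) :
    (P.parts.erase (P.part m)).sup id = s.erase m \ (P.part m).erase m := by
  ext x
  simp only [Finset.mem_sup, Finset.mem_erase, Finset.mem_sdiff, id]
  constructor
  · rintro ⟨t, ⟨htne, htp⟩, hx⟩
    have hxs : x ∈ s := P.le htp hx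
    have hxm : x ∉ P.part m := fun hc => htne (P.eq_of_mem_parts htp (P.part_mem.2 hm) hx hc)
    have hxne : x ≠ m := fun hc => hxm (by rw [hc]; exact P.mem_part hm)
    exact ⟨⟨hxne, hxs⟩, fun hc => hxm hc.2⟩
  · rintro ⟨⟨hxne, hxs⟩, hnx⟩
    have hxm : x ∉ P.part m := fun hc => hnx ⟨hxne, hc⟩
    refine ⟨P.part x, ⟨?_, P.part_mem.2 hxs⟩, P.mem_part hxs⟩
    intro hc
    exact hxm (hc ▸ P.mem_part hxs)

/-- Forward direction for partitions: extract the block of `m`. -/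
def partFwd (s : Finset ℕ) (m : ℕ) (hm : m ∈ s) (P : Finpartition s) :
    Σ B : {B : Finset ℕ // B ⊆ s.erase m}, Finpartition (s.erase m \ B.1) :=
  ⟨⟨(P.part m).erase m, by
      intro x hx
      rw [Finset.mem_erase] at hx ⊢
      exact ⟨hx.1, P.le (P.part_mem.2 hm) hx.2⟩⟩,
    P.ofSubset (Finset.erase_subset _ _) (erase_parts_sup s m hm P)⟩

/-- Backward direction for partitions: add back the block of `m`. -/
def partBwd (s : Finset ℕ) (m : ℕ) (hm : m ∈ s)
    (p : Σ B : {B : Finset ℕ // B ⊆ s.erase m}, Finpartition (s.erase m \ B.1)) :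
    Finpartition s :=
  p.2.extend (b := insert m p.1.1)
    (by simp [Finset.bot_eq_empty, Finset.insert_ne_empty])
    (by
      rw [Finset.disjoint_left]
      intro x hx hx2
      rw [Finset.mem_sdiff, Finset.mem_erase] at hx
      rcases Finset.mem_insert.1 hx2 with rfl | hx2
      · exact hx.1.1 rfl
      · exact hx.2 hx2)
    (by
      have hB := p.1.2
      ext x
      simp only [Finset.sup_eq_union, Finset.mem_union, Finset.mem_sdiff, Finset.mem_erase,
        Finset.mem_insert]
      constructor
      · rintro (⟨⟨_, hxs⟩, _⟩ | rfl | hx)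
        · exact hxs
        · exact hm
        · exact (Finset.mem_erase.1 (hB hx)).2
      · intro hxs
        by_cases hxm : x = m
        · exact Or.inr (Or.inl hxm)
        · by_cases hxB : x ∈ p.1.1
          · exact Or.inr (Or.inr hxB)
          · exact Or.inl ⟨⟨hxm, hxs⟩, hxB⟩)

lemma partBwd_partFwd (s : Finset ℕ) (m : ℕ) (hm : m ∈ s) (P : Finpartition s) :
    partBwd s m hm (partFwd s m hm P) = P := by
  apply Finpartition.ext
  show insert (insert m ((P.part m).erase m)) (P.parts.erase (P.part m)) = P.parts
  rw [Finset.insert_erase (P.mem_part hm), Finset.insert_erase (P.part_mem.2 hm)]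

lemma not_mem_parts_of_mem {s : Finset ℕ} {m : ℕ} {B : Finset ℕ} (hB : B ⊆ s.erase m)
    (Q : Finpartition (s.erase m \ B)) : insert m B ∉ Q.parts := by
  intro hc
  have := Q.le hc (Finset.mem_insert_self m B)
  rw [Finset.mem_sdiff, Finset.mem_erase] at this
  exact this.1.1 rfl

lemma partBwd_injective (s : Finset ℕ) (m : ℕ) (hm : m ∈ s) :
    Function.Injective (partBwd s m hm) := by
  rintro ⟨⟨B1, hB1⟩, Q1⟩ ⟨⟨B2, hB2⟩, Q2⟩ h
  have hp : insert (insert m B1) Q1.parts = insert (insert m B2) Q2.parts :=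
    congrArg Finpartition.parts h
  have hmm : ∀ {B : Finset ℕ}, B ⊆ s.erase m → m ∉ B := by
    intro B hB hc
    exact (Finset.mem_erase.1 (hB hc)).1 rfl
  have hI : insert m B1 = insert m B2 := by
    have h1 : insert m B1 ∈ insert (insert m B2) Q2.parts := by
      rw [← hp]; exact Finset.mem_insert_self _ _
    rcases Finset.mem_insert.1 h1 with h1 | h1
    · exact h1
    · exact absurd h1 (by
        intro hc
        have := Q2.le hc (Finset.mem_insert_self m B1)
        rw [Finset.mem_sdiff, Finset.mem_erase] at this
        exact this.1.1 rfl)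
  have hBeq : B1 = B2 := by
    have := congrArg (Finset.erase · m) hI
    simpa [Finset.erase_insert (hmm hB1), Finset.erase_insert (hmm hB2)] using this
  subst hBeq
  have hQ : Q1 = Q2 := by
    apply Finpartition.ext
    have h1 := congrArg (Finset.erase · (insert m B1)) hp
    simpa [Finset.erase_insert (not_mem_parts_of_mem hB1 Q1),
      Finset.erase_insert (not_mem_parts_of_mem hB1 Q2)] using h1
  subst hQ
  rfl

/-- The decomposition equivalence for partitions. -/
def partEquiv (s : Finset ℕ) (m : ℕ) (hm : m ∈ s) :
    Finpartition s ≃ Σ B : {B : Finset ℕ // B ⊆ s.erase m}, Finpartition (s.erase m \ B.1) where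
  toFun := partFwd s m hm
  invFun := partBwd s m hm
  left_inv := partBwd_partFwd s m hm
  right_inv := fun p => partBwd_injective s m hm (partBwd_partFwd s m hm (partBwd s m hm p))

/-! ### The main equivalence -/

lemma shelf_empty_unique (t : TShelf) (h : t.labels = (∅ : Finset ℕ).val) : t = leaf := by
  cases t with
  | leaf => rfl
  | node a l r => simp [labels] at h

/-- Shelves over `s` are in bijection with finpartitions of `s`. -/
def mainEquiv (s : Finset ℕ) : ShelfT s ≃ Finpartition s :=
  if hs : s.Nonempty then
    (treeEquiv s hs).trans
      ((Equiv.sigmaCongrRight fun (B : {B : Finset ℕ // B ⊆ s.erase (s.min' hs)}) => mainEquiv (s.erase (s.min' hs) \ B.1)).trans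
        (partEquiv s (s.min' hs) (s.min'_mem hs)).symm)
  else by
    have hse : s = ∅ := Finset.not_nonempty_iff_eq_empty.mp hs
    subst hse
    haveI : Unique (ShelfT (∅ : Finset ℕ)) :=
      { default := ⟨leaf, by simp [labels], rfl, rfl⟩
        uniq := fun t => Subtype.ext (shelf_empty_unique t.1 t.2.1) }
    haveI : Unique (Finpartition (∅ : Finset ℕ)) :=
      inferInstanceAs (Unique (Finpartition (⊥ : Finset ℕ)))
    exact Equiv.ofUnique _ _
termination_by s.card
decreasing_by
  have h1 : (s.erase (s.min' hs) \ B.1).card ≤ (s.erase (s.min' hs)).card :=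
    Finset.card_le_card (Finset.sdiff_subset)
  have h2 : (s.erase (s.min' hs)).card < s.card :=
    Finset.card_erase_lt_of_mem (s.min'_mem hs)
  omega

end TShelf

/-- treeshelves of size `n` avoiding "left child having a right
child" are counted by the Bell numbers (set partitions of `{1,…,n}`). -/
theorem stmt5 (n : ℕ) :
    Nat.card {t : TShelf // TShelf.IsShelf n t ∧ t.avoidsLR = true} =
      Nat.card (Finpartition (Finset.Icc 1 n)) := by
  have e1 : {t : TShelf // TShelf.IsShelf n t ∧ t.avoidsLR = true} ≃
      TShelf.ShelfT (Finset.Icc 1 n) :=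
    Equiv.subtypeEquivRight fun t => by
      unfold TShelf.IsShelf
      tauto
  exact Nat.card_congr (e1.trans (TShelf.mainEquiv _))
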